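/- For $b, m, h > 0$, define $g_h(t) = \frac{m^2}{t} + \frac{h^{2b+1} - (h - \min\{h,t\})^{2b+1}}{2b+1}$ for $t > 0$. If $h \le h^\# = \frac{b+1}{b^{b/(b+1)}} m^{1/(b+1)}$, then $g_h$ is (weakly) decreasing on $(0,\infty)$, i.e. $g_h(s) \ge g_h(t)$ whenever $0 < s \le t$. -/

import Mathlib

open Real Set

private lemma amgm_key (b m h : ℝ) (hb : 0 < b) (hm : 0 < m) (hh : 0 < h)
    (hle : h ≤ (b+1) / b ^ (b/(b+1)) * m ^ (1/(b+1)))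
    (x : ℝ) (hx : 0 ≤ x) (hxh : x ≤ h) : x * (h - x) ^ b ≤ m := by
  have hb1 : (0:ℝ) < b + 1 := by linarith
  have hhx : (0:ℝ) ≤ h - x := by linarith
  have hgm := Real.geom_mean_le_arith_mean2_weighted
    (w₁ := 1/(b+1)) (w₂ := b/(b+1)) (p₁ := (b+1)*x) (p₂ := (b+1)/b*(h-x))
    (by positivity) (by positivity) (by positivity)
    (mul_nonneg (by positivity) hhx) (by field_simp; ring)
  have hrhs : (1/(b+1)) * ((b+1)*x) + (b/(b+1)) * ((b+1)/b*(h-x)) = h := by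
    field_simp
    ring
  rw [hrhs] at hgm
  have hL0 : 0 ≤ ((b+1)*x) ^ (1/(b+1)) * ((b+1)/b*(h-x)) ^ (b/(b+1)) :=
    mul_nonneg (rpow_nonneg (by positivity) _) (rpow_nonneg (mul_nonneg (by positivity) hhx) _)
  have hpow := Real.rpow_le_rpow hL0 hgm hb1.le
  -- simplify LHS of hpow
  have hLHS : (((b+1)*x) ^ (1/(b+1)) * ((b+1)/b*(h-x)) ^ (b/(b+1))) ^ (b+1)
      = ((b+1)*x) * ((b+1)/b*(h-x)) ^ b := by
    rw [Real.mul_rpow (rpow_nonneg (by positivity) _) (rpow_nonneg (mul_nonneg (by positivity) hhx) _),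
      ← Real.rpow_mul (by positivity), ← Real.rpow_mul (mul_nonneg (by positivity) hhx)]
    rw [show 1/(b+1)*(b+1) = 1 by field_simp, show b/(b+1)*(b+1) = b by field_simp,
      Real.rpow_one]
  rw [hLHS] at hpow
  -- hpow : (b+1)*x * ((b+1)/b*(h-x))^b ≤ h^(b+1)
  have hexp : ((b+1)/b*(h-x)) ^ b = ((b+1)/b) ^ b * (h-x) ^ b :=
    Real.mul_rpow (by positivity) hhx
  rw [hexp] at hpow
  -- bound h^(b+1) ≤ (b+1)^(b+1)/b^b * m
  have hhb : h ^ (b+1) ≤ ((b+1) / b ^ (b/(b+1)) * m ^ (1/(b+1))) ^ (b+1) :=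
    Real.rpow_le_rpow hh.le hle hb1.le
  have hrhs2 : ((b+1) / b ^ (b/(b+1)) * m ^ (1/(b+1))) ^ (b+1)
      = (b+1) ^ (b+1) / b ^ b * m := by
    rw [Real.mul_rpow (by positivity) (rpow_nonneg hm.le _),
      Real.div_rpow hb1.le (rpow_nonneg hb.le _),
      ← Real.rpow_mul hb.le, ← Real.rpow_mul hm.le,
      show b/(b+1)*(b+1) = b by field_simp, show 1/(b+1)*(b+1) = 1 by field_simp,
      Real.rpow_one]
  rw [hrhs2] at hhb
  -- combine
  have hpb : (0:ℝ) < 1 + b := by linarith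
  have hsplit : (b+1) ^ (b+1) = (b+1) * (b+1) ^ b := by
    rw [show (b+1:ℝ) = 1 + b from by ring, Real.rpow_add hpb, Real.rpow_one]
  have hK : (b+1) * ((b+1)/b) ^ b = (b+1) ^ (b+1) / b ^ b := by
    rw [Real.div_rpow hb1.le hb.le, hsplit]
    ring
  have hKpos : 0 < (b+1) ^ (b+1) / b ^ b := by positivity
  have hfin : (b+1) ^ (b+1) / b ^ b * (x * (h-x) ^ b) ≤ (b+1) ^ (b+1) / b ^ b * m := by
    calc (b+1) ^ (b+1) / b ^ b * (x * (h-x) ^ b)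
        = (b+1) * x * (((b+1)/b) ^ b * (h-x) ^ b) := by rw [← hK]; ring
      _ ≤ h ^ (b+1) := hpow
      _ ≤ (b+1) ^ (b+1) / b ^ b * m := hhb
  exact le_of_mul_le_mul_left hfin hKpos

private lemma hasDeriv_f (b m h x : ℝ) (hb : 0 < b) (hx : x ≠ 0) :
    HasDerivAt (fun y => m^2 / y - (h - y) ^ (2*b+1) / (2*b+1))
      (-(m^2 / x^2) + (h - x) ^ (2*b)) x := by
  have h1 : HasDerivAt (fun y : ℝ => m^2 / y) (-(m^2/x^2)) x := by
    have := (hasDerivAt_inv hx).const_mul (m^2)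
    simpa [div_eq_mul_inv, neg_mul, mul_comm] using this
  have h2 : HasDerivAt (fun y : ℝ => h - y) (-1) x := by
    simpa using (hasDerivAt_id x).const_sub h
  have h3 : HasDerivAt (fun y : ℝ => (h - y) ^ (2*b+1)) (-((2*b+1) * (h - x) ^ (2*b))) x := by
    have := h2.rpow_const (p := 2*b+1) (Or.inr (by linarith))
    convert this using 1
    rw [show 2*b+1-1 = 2*b by ring]
    ring
  have h4 := h1.sub (h3.div_const (2*b+1))
  refine h4.congr_deriv ?_
  rw [neg_div, mul_div_cancel_left₀ _ (by linarith : (2*b+1:ℝ) ≠ 0)]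
  ring

private lemma F_anti (b m h : ℝ) (hb : 0 < b) (hm : 0 < m) (hh : 0 < h)
    (hle : h ≤ (b+1) / b ^ (b/(b+1)) * m ^ (1/(b+1))) :
    ∀ s t : ℝ, 0 < s → s ≤ t → t ≤ h →
    m^2/t - (h-t)^(2*b+1)/(2*b+1) ≤ m^2/s - (h-s)^(2*b+1)/(2*b+1) := by
  intro s t hs hst hth
  have anti : AntitoneOn (fun y => m^2 / y - (h - y) ^ (2*b+1) / (2*b+1)) (Icc s t) := by
    apply antitoneOn_of_deriv_nonpos (convex_Icc s t)
    · intro x hx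
      exact (hasDeriv_f b m h x hb (ne_of_gt (lt_of_lt_of_le hs hx.1))).continuousAt.continuousWithinAt
    · rw [interior_Icc]
      intro x hx
      exact (hasDeriv_f b m h x hb (ne_of_gt (lt_of_lt_of_le hs hx.1.le))).differentiableAt.differentiableWithinAt
    · rw [interior_Icc]
      intro x hx
      have hx0 : 0 < x := hs.trans hx.1
      rw [(hasDeriv_f b m h x hb (ne_of_gt hx0)).deriv]
      have hxh : x ≤ h := hx.2.le.trans hth
      have hhx : (0:ℝ) ≤ h - x := by linarith
      have key := amgm_key b m h hb hm hh hle x hx0.le hxh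
      have hnn : 0 ≤ x * (h-x)^b := mul_nonneg hx0.le (rpow_nonneg hhx b)
      have e : (h-x)^(2*b) = ((h-x)^b)^(2:ℕ) := by
        rw [← Real.rpow_natCast ((h-x)^b) 2, ← Real.rpow_mul hhx]
        norm_num
        ring_nf
      have hsq : x^2 * (h-x)^(2*b) ≤ m^2 := by
        rw [e]
        nlinarith [rpow_nonneg hhx b]
      have h2 : (h-x)^(2*b) ≤ m^2 / x^2 := by
        rw [le_div_iff₀ (by positivity)]
        linarith
      linarith
  have hmem_s : s ∈ Icc s t := ⟨le_refl s, hst⟩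
  have hmem_t : t ∈ Icc s t := ⟨hst, le_refl t⟩
  exact anti hmem_s hmem_t hst

/-- If h ≤ h^#, then g_h is weakly decreasing on (0,∞). -/
theorem g_decreasing (b m h : ℝ) (hb : 0 < b) (hm : 0 < m) (hh : 0 < h)
    (hle : h ≤ (b+1) / b ^ (b/(b+1)) * m ^ (1/(b+1))) :
    ∀ s t : ℝ, 0 < s → s ≤ t →
      m^2 / t + (h ^ (2*b+1) - (h - min h t) ^ (2*b+1)) / (2*b+1) ≤
      m^2 / s + (h ^ (2*b+1) - (h - min h s) ^ (2*b+1)) / (2*b+1) := by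
  intro s t hs hst
  have ht : 0 < t := hs.trans_le hst
  have hP : (0:ℝ) < 2*b+1 := by linarith
  rw [sub_div, sub_div]
  have key : m^2/t - (h - min h t)^(2*b+1)/(2*b+1) ≤ m^2/s - (h - min h s)^(2*b+1)/(2*b+1) := by
    rcases le_total t h with hth | hht
    · -- t ≤ h, so s ≤ h
      rw [min_eq_right hth, min_eq_right (hst.trans hth)]
      exact F_anti b m h hb hm hh hle s t hs hst hth
    · rcases le_total h s with hhs | hsh
      · -- h ≤ s : both mins are h
        rw [min_eq_left hhs, min_eq_left (hhs.trans hst)]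
        have : m^2/t ≤ m^2/s := by gcongr
        linarith
      · -- s ≤ h ≤ t
        rw [min_eq_right hsh, min_eq_left hht]
        have h1 := F_anti b m h hb hm hh hle s h hs hsh le_rfl
        have h2 : m^2/t ≤ m^2/h := by gcongr
        have hz : (h - h : ℝ) ^ (2*b+1) = 0 := by
          rw [sub_self, Real.zero_rpow (by positivity)]
        rw [hz] at h1 ⊢
        simp only [zero_div] at h1 ⊢
        linarith
  linarith
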